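/- Let n be a positive integer and let O be a Hermitian complex n×n matrix written as O = P − Q, where P and Q are positive semidefinite n×n matrices. Let d be a real number with d > 0 and Re(tr P) + Re(tr Q) ≤ d. Then there exists a complex matrix ρ' indexed by (Fin 2 × Fin n), depending only on P, Q and d, that is positive semidefinite with trace 1, such that for every positive semidefinite complex n×n matrix ρ with trace 1, tr( ρ' · ( d · ((E₀₀ − E₁₁) ⊗ ρ) ) ) = tr( ρ · O ), where E₀₀ and E₁₁ are the 2×2 matrices with a single 1 in position (0,0) resp. (1,1), ⊗ is the Kronecker product, and matrix multiplication and trace are the usual ones. -/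

import Mathlib

open Matrix Kronecker
open scoped ComplexOrder


lemma kronCT {m k : Type*} [Fintype m] [Fintype k] (A : Matrix m m ℂ) (B : Matrix k k ℂ) :
    (A ⊗ₖ B)ᴴ = Aᴴ ⊗ₖ Bᴴ := by
  ext ⟨i, p⟩ ⟨j, q⟩
  simp [conjTranspose_apply, kroneckerMap_apply, mul_comm]

lemma kronPSD {m k : Type*} [Fintype m] [Fintype k] [DecidableEq m] [DecidableEq k] {A : Matrix m m ℂ} {B : Matrix k k ℂ}
    (hA : A.PosSemidef) (hB : B.PosSemidef) : (A ⊗ₖ B).PosSemidef := by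
  exact hA.kronecker hB

lemma smulPSD {m : Type*} [Fintype m] {A : Matrix m m ℂ} (hA : A.PosSemidef)
    {c : ℝ} (hc : 0 ≤ c) : ((c : ℂ) • A).PosSemidef := by
  constructor
  · unfold IsHermitian
    rw [conjTranspose_smul, hA.isHermitian.eq]
    simp [Complex.conj_ofReal]
  · intro x
    have := hA.2 x
    simpa [Finsupp.mul_sum, mul_left_comm, mul_assoc] using
      smul_nonneg (by exact_mod_cast hc : (0 : ℂ) ≤ (c : ℂ)) this

lemma EPSD {i : Fin 2} : (Matrix.single i i (1 : ℂ)).PosSemidef := by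
  have h : Matrix.single i i (1 : ℂ) =
      (Matrix.single i i (1 : ℂ))ᴴ * Matrix.single i i (1 : ℂ) := by
    have he : (Matrix.single i i (1 : ℂ))ᴴ = Matrix.single i i (1 : ℂ) := by
      ext a b
      simp [conjTranspose_apply, Matrix.single, and_comm]
    rw [he, Matrix.single_mul_single_same, one_mul]
  rw [h]; exact posSemidef_conjTranspose_mul_self _

theorem stmt_0 (n : ℕ) (hn : 0 < n)
    (O P Q : Matrix (Fin n) (Fin n) ℂ)
    (hO : O.IsHermitian) (hOPQ : O = P - Q)
    (hP : P.PosSemidef) (hQ : Q.PosSemidef)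
    (d : ℝ) (hd : 0 < d)
    (htr : P.trace.re + Q.trace.re ≤ d) :
    ∃ ρ' : Matrix (Fin 2 × Fin n) (Fin 2 × Fin n) ℂ,
      ρ'.PosSemidef ∧ ρ'.trace = 1 ∧
      ∀ ρ : Matrix (Fin n) (Fin n) ℂ, ρ.PosSemidef → ρ.trace = 1 →
        (ρ' * ((d : ℂ) • ((Matrix.single (0 : Fin 2) (0 : Fin 2) (1 : ℂ) -
            Matrix.single (1 : Fin 2) (1 : Fin 2) (1 : ℂ)) ⊗ₖ ρ))).trace
          = (ρ * O).trace := by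
  classical
  set E0 := Matrix.single (0 : Fin 2) (0 : Fin 2) (1 : ℂ) with hE0
  set E1 := Matrix.single (1 : Fin 2) (1 : Fin 2) (1 : ℂ) with hE1
  have hd0 : (d : ℂ) ≠ 0 := by exact_mod_cast hd.ne'
  have hn0 : (n : ℝ) ≠ 0 := by exact_mod_cast hn.ne'
  have hPre : P.trace = (P.trace.re : ℂ) := by
    have := Matrix.trace_conjTranspose P
    rw [hP.isHermitian.eq] at this
    exact ((Complex.conj_eq_iff_re).mp this.symm).symm
  have hQre : Q.trace = (Q.trace.re : ℂ) := by
    have := Matrix.trace_conjTranspose Q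
    rw [hQ.isHermitian.eq] at this
    exact ((Complex.conj_eq_iff_re).mp this.symm).symm
  set c : ℝ := 1 - (P.trace.re + Q.trace.re) / d with hc
  have hc0 : 0 ≤ c := sub_nonneg.mpr ((div_le_one hd).mpr htr)
  refine ⟨E0 ⊗ₖ (((d⁻¹ : ℝ) : ℂ) • P) + E1 ⊗ₖ (((d⁻¹ : ℝ) : ℂ) • Q)
      + ((c / (2 * n) : ℝ) : ℂ) • (1 : Matrix (Fin 2 × Fin n) (Fin 2 × Fin n) ℂ), ?_, ?_, ?_⟩
  · exact ((kronPSD EPSD (smulPSD hP (inv_nonneg.mpr hd.le))).add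
      (kronPSD EPSD (smulPSD hQ (inv_nonneg.mpr hd.le)))).add
      (smulPSD Matrix.PosSemidef.one (div_nonneg hc0 (by positivity)))
  · rw [Matrix.trace_add, Matrix.trace_add, Matrix.trace_kronecker, Matrix.trace_kronecker,
      Matrix.trace_smul, Matrix.trace_smul, Matrix.trace_smul, Matrix.trace_one, hE0, hE1,
      Matrix.trace_single_eq_same, Matrix.trace_single_eq_same, hPre, hQre]
    have hcard : (Fintype.card (Fin 2 × Fin n) : ℂ) = 2 * n := by simp [Fintype.card_prod]
    rw [hcard]
    have : ((c / (2 * n) : ℝ) : ℂ) * (2 * n) = (c : ℂ) := by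
      push_cast
      field_simp
    rw [smul_eq_mul, smul_eq_mul, smul_eq_mul, this, hc]
    push_cast
    field_simp
    ring
  · intro ρ hρ hρt
    have hsub : (E0 - E1) ⊗ₖ ρ = E0 ⊗ₖ ρ - E1 ⊗ₖ ρ := by
      ext ⟨i, p⟩ ⟨j, q⟩
      simp [Matrix.kroneckerMap_apply, Matrix.sub_apply, sub_mul]
    have h01 : (0 : Fin 2) ≠ 1 := by decide
    rw [hsub, smul_sub, Matrix.mul_sub, Matrix.mul_smul, Matrix.mul_smul,
      Matrix.trace_sub, Matrix.trace_smul, Matrix.trace_smul]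
    rw [Matrix.add_mul, Matrix.add_mul, Matrix.add_mul, Matrix.add_mul]
    rw [← Matrix.mul_kronecker_mul, ← Matrix.mul_kronecker_mul, ← Matrix.mul_kronecker_mul,
      ← Matrix.mul_kronecker_mul]
    rw [hE0, hE1, Matrix.single_mul_single_same, Matrix.single_mul_single_same,
      Matrix.single_mul_single_of_ne (h := h01), Matrix.single_mul_single_of_ne (h := h01.symm)]
    simp only [one_mul, Matrix.zero_kronecker, Matrix.one_mul, Matrix.trace_add,
      Matrix.trace_kronecker, Matrix.trace_single_eq_same, Matrix.trace_zero,
      Matrix.trace_smul, smul_eq_mul, Matrix.smul_mul]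
    rw [hρt, hOPQ, Matrix.mul_sub, Matrix.trace_sub, Matrix.trace_mul_comm ρ P,
      Matrix.trace_mul_comm ρ Q]
    push_cast
    field_simp
    ring
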